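/- Fix r > 0 and T ∈ (π, 2π), and let E = {r·exp(i·t) : 0 ≤ t ≤ T} ⊆ ℂ with the metric induced from ℂ. If E admits an L-Lipschitz mean, then L > 1/(2π − T). -/

import Mathlib

open Real

lemma chord_abs (θ : ℝ) :
    ‖Complex.exp (θ * Complex.I) - 1‖ = 2 * |Real.sin (θ / 2)| := by
  rw [Complex.exp_mul_I, ← Complex.ofReal_cos, ← Complex.ofReal_sin]
  have : (↑(Real.cos θ) + ↑(Real.sin θ) * Complex.I - 1 : ℂ)
      = ↑(Real.cos θ - 1) + ↑(Real.sin θ) * Complex.I := by push_cast; ring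
  rw [this, Complex.norm_add_mul_I]
  have h1 : (Real.cos θ - 1) ^ 2 + Real.sin θ ^ 2 = 2 - 2 * Real.cos θ := by
    nlinarith [Real.sin_sq_add_cos_sq θ]
  rw [h1, Real.abs_sin_half]
  rw [show (2 : ℝ) - 2 * Real.cos θ = 2 ^ 2 * ((1 - Real.cos θ) / 2) by ring,
    Real.sqrt_mul (by positivity), Real.sqrt_sq (by norm_num)]

lemma chord_dist (r : ℝ) (hr : 0 ≤ r) (u v : ℝ) :
    dist (↑r * Complex.exp (u * Complex.I)) (↑r * Complex.exp (v * Complex.I))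
      = 2 * r * |Real.sin ((u - v) / 2)| := by
  rw [Complex.dist_eq]
  have : (↑r * Complex.exp (u * Complex.I) - ↑r * Complex.exp (v * Complex.I))
      = (↑r * Complex.exp (v * Complex.I)) * (Complex.exp ((↑(u - v)) * Complex.I) - 1) := by
    rw [mul_sub, mul_one, mul_assoc, ← Complex.exp_add]
    push_cast; ring_nf
  rw [this, norm_mul, norm_mul, Complex.norm_exp_ofReal_mul_I, Complex.norm_real, Real.norm_eq_abs,
    abs_of_nonneg hr, chord_abs]
  ring

lemma sin_ge_half {x : ℝ} (h1 : π / 6 ≤ x) (h2 : x ≤ 5 * π / 6) : 1 / 2 ≤ Real.sin x := by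
  have hpi := Real.pi_pos
  rw [← Real.sin_pi_div_six]
  rcases le_or_gt x (π / 2) with h | h
  · exact (Real.strictMonoOn_sin.monotoneOn ⟨by linarith, by linarith⟩
      ⟨by linarith, by linarith⟩ h1)
  · rw [← Real.sin_pi_sub x]
    exact (Real.strictMonoOn_sin.monotoneOn ⟨by linarith, by linarith⟩
      ⟨by linarith, by linarith⟩ (by linarith))

lemma dichot {x : ℝ} (h : |Real.sin (x / 2)| < 1 / 2) :
    x < π / 3 ∨ 5 * π / 3 < x := by
  by_contra hc
  push_neg at hc
  have hh : 1 / 2 ≤ Real.sin (x / 2) := sin_ge_half (by linarith [hc.1]) (by linarith [hc.2])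
  rw [abs_of_nonneg (by linarith)] at h
  linarith

/-- Fix `r > 0` and `T ∈ (π, 2π)` and let
`E = {r·exp(i t) : 0 ≤ t ≤ T} ⊆ ℂ`. If `E` admits an `L`-Lipschitz mean, then
`L > 1/(2π − T)`. -/
theorem long_circular_arc_lipschitz_mean_lower_bound
    (r T : ℝ) (hr : 0 < r) (hT₁ : π < T) (hT₂ : T < 2 * π)
    (E : Set ℂ)
    (hE : E = {z : ℂ | ∃ t : ℝ, 0 ≤ t ∧ t ≤ T ∧ z = r * Complex.exp (t * Complex.I)})
    (L : ℝ) (μ : E → E → E)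
    (hsym : ∀ a b : E, μ a b = μ b a)
    (hidem : ∀ a : E, μ a a = a)
    (hlip : ∀ a b a' b' : E, dist (μ a b) (μ a' b') ≤ L * (dist a a' + dist b b')) :
    1 / (2 * π - T) < L := by
  by_contra hcon
  push_neg at hcon
  have hpi := Real.pi_pos
  have hT0 : (0 : ℝ) ≤ T := by linarith
  have hδ : 0 < 2 * π - T := by linarith
  -- membership of arc points
  have hmem : ∀ t : ℝ, 0 ≤ t → t ≤ T → (↑r * Complex.exp (t * Complex.I)) ∈ E := by
    intro t h0 h1; rw [hE]; exact ⟨t, h0, h1, rfl⟩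
  -- parametrization
  set f : Set.Icc (0:ℝ) T → E :=
    fun t => ⟨↑r * Complex.exp ((t : ℝ) * Complex.I), hmem t t.2.1 t.2.2⟩ with hf
  -- distances between parametrized points
  have hdistf : ∀ u v : Set.Icc (0:ℝ) T,
      dist (f u) (f v) = 2 * r * |Real.sin (((u : ℝ) - v) / 2)| := by
    intro u v
    rw [Subtype.dist_eq]
    exact chord_dist r hr.le u v
  have hfinj : Function.Injective f := by
    intro u v huv
    have h0 : dist (f u) (f v) = 0 := by rw [huv, dist_self]
    rw [hdistf] at h0
    have hs : Real.sin (((u : ℝ) - v) / 2) = 0 := by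
      rcases mul_eq_zero.mp h0 with h | h
      · nlinarith
      · exact abs_eq_zero.mp h
    rcases Real.sin_eq_zero_iff.mp hs with ⟨n, hn⟩
    have hb1 : ((u : ℝ) - v) / 2 < π := by
      have h1 := u.2.2; have h2 := v.2.1; linarith
    have hb2 : -π < ((u : ℝ) - v) / 2 := by
      have h1 := u.2.1; have h2 := v.2.2; linarith
    have hn0 : n = 0 := by
      by_contra hn0
      rcases lt_or_gt_of_ne hn0 with h | h
      · have : (n : ℝ) ≤ -1 := by exact_mod_cast (by omega : n ≤ -1)
        nlinarith
      · have : (1 : ℝ) ≤ n := by exact_mod_cast (by omega : (1:ℤ) ≤ n)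
        nlinarith
    rw [hn0] at hn
    have : (u : ℝ) = v := by push_cast at hn; linarith
    exact Subtype.ext this
  have hfsurj : Function.Surjective f := by
    rintro ⟨w, hw⟩
    have hw' : w ∈ {z : ℂ | ∃ t : ℝ, 0 ≤ t ∧ t ≤ T ∧ z = ↑r * Complex.exp (↑t * Complex.I)} :=
      hE ▸ hw
    obtain ⟨t, h0, h1, hz⟩ := hw'
    exact ⟨⟨t, h0, h1⟩, Subtype.ext hz.symm⟩
  have hfc : Continuous f := by
    apply Continuous.subtype_mk
    exact continuous_const.mul ((Complex.continuous_ofReal.comp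
      continuous_subtype_val).mul continuous_const).cexp
  -- the homeomorphism
  set e : Set.Icc (0:ℝ) T ≃ E := Equiv.ofBijective f ⟨hfinj, hfsurj⟩ with he
  have hec : Continuous e := hfc
  set homeo : Set.Icc (0:ℝ) T ≃ₜ E := hec.homeoOfEquivCompactToT2 with hhomeo
  set p : E → ℝ := fun z => ((homeo.symm z : Set.Icc (0:ℝ) T) : ℝ) with hp
  have hpc : Continuous p := continuous_subtype_val.comp homeo.symm.continuous
  have hpf : ∀ t : Set.Icc (0:ℝ) T, p (f t) = t := by
    intro t
    have h1 : homeo.symm (f t) = t := by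
      have h2 : homeo t = f t := rfl
      rw [← h2, Homeomorph.symm_apply_apply]
    show ((homeo.symm (f t) : Set.Icc (0:ℝ) T) : ℝ) = t
    rw [h1]
  have hfp : ∀ z : E, f (homeo.symm z) = z := fun z => homeo.apply_symm_apply z
  have hp0 : ∀ z : E, 0 ≤ p z := fun z => (homeo.symm z).2.1
  have hpT : ∀ z : E, p z ≤ T := fun z => (homeo.symm z).2.2
  -- distance via parameters
  have hdistp : ∀ x y : E, dist x y = 2 * r * |Real.sin ((p x - p y) / 2)| := by
    intro x y
    rw [← hfp x, ← hfp y, hdistf, hpf, hpf]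
  -- endpoints
  set a : E := f ⟨0, le_refl _, hT0⟩ with ha
  set b : E := f ⟨T, hT0, le_refl _⟩ with hb
  have hpa : p a = 0 := hpf _
  have hpb : p b = T := hpf _
  -- dist a b
  have hsinT : Real.sin (T / 2) = Real.sin ((2 * π - T) / 2) := by
    rw [show (2 * π - T) / 2 = π - T / 2 by ring, Real.sin_pi_sub]
  have hdab : dist a b = 2 * r * Real.sin ((2 * π - T) / 2) := by
    rw [hdistp, hpa, hpb]
    rw [show (0 - T) / 2 = -(T / 2) by ring, Real.sin_neg, abs_neg, abs_of_nonneg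
      (Real.sin_nonneg_of_nonneg_of_le_pi (by linarith) (by linarith)), hsinT]
  have hsinpos : 0 < Real.sin ((2 * π - T) / 2) :=
    Real.sin_pos_of_pos_of_lt_pi (by linarith) (by linarith)
  have hdabpos : 0 < dist a b := by rw [hdab]; positivity
  -- key smallness
  have hkey : L * dist a b < r := by
    have h1 : dist a b < r * (2 * π - T) := by
      have := Real.sin_lt (show 0 < (2 * π - T) / 2 by linarith)
      rw [hdab]; nlinarith
    have h2 : L * dist a b ≤ (1 / (2 * π - T)) * dist a b :=
      mul_le_mul_of_nonneg_right hcon hdabpos.le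
    have h3 : (1 / (2 * π - T)) * dist a b < (1 / (2 * π - T)) * (r * (2 * π - T)) := by
      apply mul_lt_mul_of_pos_left h1; positivity
    calc L * dist a b ≤ _ := h2
      _ < _ := h3
      _ = r := by field_simp
  -- constraint
  have hC : ∀ x y : E, dist x y ≤ L * dist a b → |Real.sin ((p x - p y) / 2)| < 1 / 2 := by
    intro x y hxy
    rw [hdistp] at hxy
    nlinarith [hxy.trans_lt hkey]
  -- L positivity
  have hL0 : 0 ≤ L := by
    have := hlip a a b b
    rw [hidem, hidem] at this
    nlinarith
  -- s
  set m : E := μ a b with hm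
  set s : ℝ := p m with hs
  have hs0 : 0 ≤ s := hp0 m
  have hsT : s ≤ T := hpT m
  have hma : dist m a ≤ L * dist a b := by
    have h1 := hlip a b a a
    rw [hidem, dist_self, dist_comm b a, ← hm] at h1
    linarith
  have hmb : dist m b ≤ L * dist a b := by
    have h1 := hlip a b b b
    rw [hidem, dist_self, ← hm] at h1
    linarith
  have hsa : |Real.sin ((s - 0) / 2)| < 1 / 2 := by rw [← hpa]; exact hC m a hma
  have hsb : |Real.sin ((s - T) / 2)| < 1 / 2 := by rw [← hpb]; exact hC m b hmb
  rw [sub_zero] at hsa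
  have hsb' : |Real.sin ((T - s) / 2)| < 1 / 2 := by
    rwa [show (T - s) / 2 = -((s - T) / 2) by ring, Real.sin_neg, abs_neg]
  have hdich1 := dichot hsa
  have hdich2 := dichot hsb'
  -- the path
  set Φ : ℝ → ℝ :=
    fun t => p (μ b (f (Set.projIcc 0 T hT0 t))) - p (μ a (f (Set.projIcc 0 T hT0 t))) with hΦ
  have lipμ : ∀ c : E, Continuous (fun x => μ c x) := by
    intro c
    apply (LipschitzWith.of_dist_le_mul (K := L.toNNReal) (f := fun x => μ c x) ?_).continuous
    intro x y
    have := hlip c x c y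
    rw [dist_self, zero_add] at this
    rwa [Real.coe_toNNReal L hL0]
  have hΦc : Continuous Φ := by
    rw [hΦ]
    apply Continuous.sub
    · exact hpc.comp ((lipμ b).comp (hfc.comp continuous_projIcc))
    · exact hpc.comp ((lipμ a).comp (hfc.comp continuous_projIcc))
  have hΦ0 : Φ 0 = s := by
    have h1 : f (Set.projIcc 0 T hT0 0) = a := by rw [Set.projIcc_left]
    show p (μ b (f (Set.projIcc 0 T hT0 0))) - p (μ a (f (Set.projIcc 0 T hT0 0))) = s
    rw [h1, hidem a, hpa, sub_zero, hsym b a, ← hm, ← hs]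
  have hΦT : Φ T = T - s := by
    have h1 : f (Set.projIcc 0 T hT0 T) = b := by rw [Set.projIcc_right]
    show p (μ b (f (Set.projIcc 0 T hT0 T))) - p (μ a (f (Set.projIcc 0 T hT0 T))) = T - s
    rw [h1, hidem b, hpb, ← hm, ← hs]
  have hΦcon : ∀ t : ℝ, |Real.sin (Φ t / 2)| < 1 / 2 := by
    intro t
    show |Real.sin ((p (μ b (f (Set.projIcc 0 T hT0 t)))
      - p (μ a (f (Set.projIcc 0 T hT0 t)))) / 2)| < 1 / 2
    apply hC
    have h1 := hlip b (f (Set.projIcc 0 T hT0 t)) a (f (Set.projIcc 0 T hT0 t))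
    rw [dist_self, add_zero, dist_comm b a] at h1
    linarith
  -- case analysis: π is between Φ 0 and Φ T
  have hmem' : π ∈ Set.uIcc (Φ 0) (Φ T) := by
    rw [hΦ0, hΦT, Set.mem_uIcc]
    rcases hdich1 with h1 | h1
    · left
      rcases hdich2 with h2 | h2
      · linarith
      · constructor <;> linarith
    · right
      rcases hdich2 with h2 | h2
      · constructor <;> linarith
      · linarith
  obtain ⟨t₀, _, ht₀⟩ := intermediate_value_uIcc (hΦc.continuousOn) hmem'
  have := hΦcon t₀
  rw [ht₀, Real.sin_pi_div_two] at this
  norm_num at this
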